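/- Let Q_1, …, Q_J ∈ ℤ[x] be nonzero polynomials, let c_1, …, c_J be nonnegative real numbers, and let m ∈ ℝ be such that for every real x > 0 one has x − Σ_{j=1}^J c_j · log|Q_j(x)| ≥ m (with the convention that the inequality is required at all x > 0 where all Q_j(x) ≠ 0). If α is a totally positive algebraic integer of degree d with minimal polynomial P such that P divides none of the polynomials Q_j, then trace(α) ≥ m·d + Σ_{j=1}^J c_j · log|∏_{i=1}^d Q_j(α_i)|, where α_1, …, α_d are the conjugates of α; in particular (1/d)·trace(α) ≥ m. -/

import Mathlib

open Polynomial

lemma exists_int_prod (P : Polynomial ℤ) (hmonic : P.Monic) (hirr : Irreducible P)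
    (d : ℕ) (hdeg : P.natDegree = d) (α : Fin d → ℝ)
    (hfact : P.map (Int.castRingHom ℝ) = ∏ i, (X - C (α i)))
    (Qj : Polynomial ℤ) (hndvd : ¬ P ∣ Qj) :
    ∃ n : ℤ, n ≠ 0 ∧ (n : ℝ) = ∏ i, Polynomial.eval (α i) (Qj.map (Int.castRingHom ℝ)) := by
  classical
  set P' : Polynomial ℚ := P.map (Int.castRingHom ℚ) with hP'
  have hmonic' : P'.Monic := hmonic.map _
  have hirr' : Irreducible P' := by
    have h := (hmonic.irreducible_iff_irreducible_map_fraction_map (K := ℚ)).mp hirr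
    rwa [algebraMap_int_eq] at h
  have hndvd' : ¬ P' ∣ Qj.map (Int.castRingHom ℚ) := by
    intro h
    apply hndvd
    rw [← modByMonic_eq_zero_iff_dvd hmonic]
    have h2 : (Qj.map (Int.castRingHom ℚ)) %ₘ P' = 0 :=
      (modByMonic_eq_zero_iff_dvd hmonic').mpr h
    rw [hP', ← Polynomial.map_modByMonic (Int.castRingHom ℚ) hmonic] at h2
    exact Polynomial.map_injective (Int.castRingHom ℚ) Int.cast_injective
      (h2.trans (Polynomial.map_zero _).symm)
  haveI : Fact (Irreducible P') := ⟨hirr'⟩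
  haveI : FiniteDimensional ℚ (AdjoinRoot P') :=
    PowerBasis.finite (AdjoinRoot.powerBasis hirr'.ne_zero)
  set θ : AdjoinRoot P' := AdjoinRoot.root P' with hθdef
  have hfinrank : Module.finrank ℚ (AdjoinRoot P') = d := by
    rw [(AdjoinRoot.powerBasis hirr'.ne_zero).finrank]
    show P'.natDegree = d
    rw [hP', hmonic.natDegree_map, hdeg]
  have hθint : IsIntegral ℤ θ := by
    refine ⟨P, hmonic, ?_⟩
    have hco : (algebraMap ℤ (AdjoinRoot P')) =
        (algebraMap ℚ (AdjoinRoot P')).comp (Int.castRingHom ℚ) := RingHom.ext_int _ _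
    show Polynomial.eval₂ (algebraMap ℤ (AdjoinRoot P')) θ P = 0
    rw [hco, ← Polynomial.eval₂_map, ← hP']
    have h1 : P'.eval₂ (algebraMap ℚ (AdjoinRoot P')) θ = Polynomial.aeval θ P' := rfl
    erw [h1, hθdef, AdjoinRoot.aeval_eq, AdjoinRoot.mk_self]
  set x : AdjoinRoot P' := AdjoinRoot.mk P' (Qj.map (Int.castRingHom ℚ)) with hx
  have hxne : x ≠ 0 := by
    rw [hx, Ne, AdjoinRoot.mk_eq_zero]
    exact hndvd'
  have hxaeval : x = Polynomial.aeval θ (Qj.map (Int.castRingHom ℚ)) := by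
    erw [hx, hθdef, AdjoinRoot.aeval_eq]
  have hxaevalZ : x = Polynomial.aeval θ Qj := by
    rw [hxaeval]
    show _ = Polynomial.eval₂ (algebraMap ℤ (AdjoinRoot P')) θ Qj
    rw [RingHom.ext_int (algebraMap ℤ (AdjoinRoot P'))
      ((algebraMap ℚ (AdjoinRoot P')).comp (Int.castRingHom ℚ)), ← Polynomial.eval₂_map]
    rfl
  have hxint : IsIntegral ℤ x := by
    rw [hxaevalZ, ← Polynomial.aeval_subalgebra_coe Qj (integralClosure ℤ (AdjoinRoot P'))
      ⟨θ, hθint⟩]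
    exact (Polynomial.aeval (⟨θ, hθint⟩ : integralClosure ℤ (AdjoinRoot P')) Qj).2
  have hnorm_int : IsIntegral ℤ (Algebra.norm ℚ x) := Algebra.isIntegral_norm ℚ hxint
  obtain ⟨n, hn⟩ := IsIntegrallyClosed.isIntegral_iff.mp hnorm_int
  have hnne : n ≠ 0 := by
    intro h0
    apply (Algebra.norm_ne_zero_iff (R := ℚ)).mpr hxne
    rw [← hn, h0]; simp
  refine ⟨n, hnne, ?_⟩
  have hnorm := Algebra.norm_eq_prod_embeddings ℚ ℂ x
  have hroot : ∀ σ : AdjoinRoot P' →ₐ[ℚ] ℂ, ∃ i, σ θ = (α i : ℂ) := by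
    intro σ
    have h1 : Polynomial.aeval (σ θ) P' = 0 := by
      erw [Polynomial.aeval_algHom_apply, hθdef, AdjoinRoot.aeval_eq, AdjoinRoot.mk_self,
        map_zero]
    have h2 : Polynomial.eval (σ θ) (P.map (Int.castRingHom ℂ)) = 0 := by
      rw [show (Int.castRingHom ℂ) = (algebraMap ℚ ℂ).comp (Int.castRingHom ℚ) from
        RingHom.ext_int _ _, ← Polynomial.map_map, ← hP', Polynomial.eval_map]
      exact h1
    have h3 : P.map (Int.castRingHom ℂ) = ∏ i, (X - C (α i : ℂ)) := by
      rw [show (Int.castRingHom ℂ) = (Complex.ofRealHom : ℝ →+* ℂ).comp (Int.castRingHom ℝ) from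
        RingHom.ext_int _ _, ← Polynomial.map_map, hfact, Polynomial.map_prod]
      simp
    rw [h3, Polynomial.eval_prod, Finset.prod_eq_zero_iff] at h2
    obtain ⟨i, _, hi⟩ := h2
    refine ⟨i, ?_⟩
    simpa [sub_eq_zero] using hi
  choose e he using hroot
  have hebij : Function.Bijective e := by
    rw [Fintype.bijective_iff_injective_and_card]
    refine ⟨?_, ?_⟩
    · intro σ τ hστ
      apply AdjoinRoot.algHom_ext
      have h4 : (α (e σ) : ℂ) = (α (e τ) : ℂ) := by rw [hστ]
      rw [← he σ, ← he τ] at h4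
      exact h4
    · rw [AlgHom.card ℚ (AdjoinRoot P') ℂ, hfinrank, Fintype.card_fin]
  have hσx : ∀ σ : AdjoinRoot P' →ₐ[ℚ] ℂ,
      σ x = ((Polynomial.eval (α (e σ)) (Qj.map (Int.castRingHom ℝ)) : ℝ) : ℂ) := by
    intro σ
    have h0 : σ x = Polynomial.aeval (σ θ) (Qj.map (Int.castRingHom ℚ)) := by
      rw [hxaeval, Polynomial.aeval_algHom_apply]
    rw [h0, he σ]
    have h1 : Polynomial.aeval ((α (e σ) : ℂ)) (Qj.map (Int.castRingHom ℚ)) =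
        Polynomial.eval ((α (e σ) : ℂ)) (Qj.map (Int.castRingHom ℂ)) := by
      rw [Polynomial.aeval_def, ← Polynomial.eval_map, Polynomial.map_map,
        show (algebraMap ℚ ℂ).comp (Int.castRingHom ℚ) = Int.castRingHom ℂ from
          RingHom.ext_int _ _]
    rw [h1, show (Int.castRingHom ℂ) = (Complex.ofRealHom : ℝ →+* ℂ).comp (Int.castRingHom ℝ)
      from RingHom.ext_int _ _, ← Polynomial.map_map, Polynomial.eval_map]
    exact Polynomial.eval₂_at_apply Complex.ofRealHom (α (e σ))
  have key : ((n : ℝ) : ℂ) =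
      ((∏ i, Polynomial.eval (α i) (Qj.map (Int.castRingHom ℝ)) : ℝ) : ℂ) := by
    calc ((n : ℝ) : ℂ) = algebraMap ℚ ℂ (algebraMap ℤ ℚ n) := by push_cast; simp
    _ = ∏ σ : AdjoinRoot P' →ₐ[ℚ] ℂ, σ x := by rw [hn, hnorm]
    _ = ∏ σ : AdjoinRoot P' →ₐ[ℚ] ℂ,
          ((Polynomial.eval (α (e σ)) (Qj.map (Int.castRingHom ℝ)) : ℝ) : ℂ) :=
        Finset.prod_congr rfl (fun σ _ => hσx σ)
    _ = ∏ i, ((Polynomial.eval (α i) (Qj.map (Int.castRingHom ℝ)) : ℝ) : ℂ) :=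
        Fintype.prod_bijective e hebij _ _ (fun σ => rfl)
    _ = _ := by push_cast; rfl
  exact_mod_cast key

/-- the auxiliary function principle for the trace. Let
`Q 1, …, Q J ∈ ℤ[x]` be nonzero polynomials, `c 1, …, c J ≥ 0` real numbers and `m ∈ ℝ`
be such that `x − ∑ j, c j · log |Q j (x)| ≥ m` for every real `x > 0` at which all
`Q j (x) ≠ 0`. If `α` is a totally positive algebraic integer of degree `d` with monic
irreducible minimal polynomial `P` (with real roots `α 1, …, α d`, all positive) such
that `P` divides none of the `Q j`, then
`trace(α) = ∑ i, α i ≥ m·d + ∑ j, c j · log |∏ i, Q j (α i)|`, and in particular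
`(1/d)·trace(α) ≥ m`. -/
theorem trace_ge_of_auxiliary_function
    (J : ℕ) (Q : Fin J → Polynomial ℤ) (c : Fin J → ℝ) (m : ℝ)
    (hQ : ∀ j, Q j ≠ 0) (hc : ∀ j, 0 ≤ c j)
    (hf : ∀ x : ℝ, 0 < x →
      (∀ j, Polynomial.eval x ((Q j).map (Int.castRingHom ℝ)) ≠ 0) →
      m ≤ x - ∑ j, c j * Real.log |Polynomial.eval x ((Q j).map (Int.castRingHom ℝ))|)
    (P : Polynomial ℤ) (hmonic : P.Monic) (hirr : Irreducible P)
    (d : ℕ) (hdeg : P.natDegree = d)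
    (α : Fin d → ℝ) (hpos : ∀ i, 0 < α i)
    (hfact : P.map (Int.castRingHom ℝ) = ∏ i, (X - C (α i)))
    (hndvd : ∀ j, ¬ P ∣ Q j) :
    m * d + ∑ j, c j * Real.log |∏ i, Polynomial.eval (α i) ((Q j).map (Int.castRingHom ℝ))|
        ≤ ∑ i, α i
      ∧ m ≤ (1 / (d : ℝ)) * ∑ i, α i := by
  classical
  have hex : ∀ j, ∃ n : ℤ, n ≠ 0 ∧
      (n : ℝ) = ∏ i, Polynomial.eval (α i) ((Q j).map (Int.castRingHom ℝ)) :=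
    fun j => exists_int_prod P hmonic hirr d hdeg α hfact (Q j) (hndvd j)
  choose n hn0 hnval using hex
  have hprod_ne : ∀ j, (∏ i, Polynomial.eval (α i) ((Q j).map (Int.castRingHom ℝ))) ≠ 0 := by
    intro j
    rw [← hnval j]
    exact_mod_cast hn0 j
  have hQne : ∀ j i, Polynomial.eval (α i) ((Q j).map (Int.castRingHom ℝ)) ≠ 0 := by
    intro j i h
    exact hprod_ne j (Finset.prod_eq_zero (Finset.mem_univ i) h)
  have hd : 0 < d := by
    rcases Nat.eq_zero_or_pos d with h0 | h
    · exfalso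
      exact hirr.not_isUnit (by
        rw [Polynomial.eq_one_of_monic_natDegree_zero hmonic (hdeg.trans h0)]
        exact isUnit_one)
    · exact h
  have hlog : ∀ j, Real.log |∏ i, Polynomial.eval (α i) ((Q j).map (Int.castRingHom ℝ))| =
      ∑ i, Real.log |Polynomial.eval (α i) ((Q j).map (Int.castRingHom ℝ))| := by
    intro j
    rw [Finset.abs_prod, Real.log_prod (fun i _ => abs_ne_zero.mpr (hQne j i))]
  have hstep : ∀ i, m ≤ α i -
      ∑ j, c j * Real.log |Polynomial.eval (α i) ((Q j).map (Int.castRingHom ℝ))| :=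
    fun i => hf (α i) (hpos i) (fun j => hQne j i)
  have hsum : (d : ℝ) * m ≤ ∑ i, (α i -
      ∑ j, c j * Real.log |Polynomial.eval (α i) ((Q j).map (Int.castRingHom ℝ))|) := by
    calc (d : ℝ) * m = ∑ _i : Fin d, m := by
          rw [Finset.sum_const, Finset.card_univ, Fintype.card_fin, nsmul_eq_mul]
    _ ≤ _ := Finset.sum_le_sum (fun i _ => hstep i)
  have E : ∑ i, ∑ j, c j * Real.log |Polynomial.eval (α i) ((Q j).map (Int.castRingHom ℝ))|
      = ∑ j, c j *
        Real.log |∏ i, Polynomial.eval (α i) ((Q j).map (Int.castRingHom ℝ))| := by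
    rw [Finset.sum_comm]
    refine Finset.sum_congr rfl (fun j _ => ?_)
    rw [hlog j, Finset.mul_sum]
  have hsum2 : (d : ℝ) * m + ∑ j, c j *
      Real.log |∏ i, Polynomial.eval (α i) ((Q j).map (Int.castRingHom ℝ))| ≤ ∑ i, α i := by
    have h1 := hsum
    rw [Finset.sum_sub_distrib, E] at h1
    linarith
  have hnonneg : 0 ≤ ∑ j, c j *
      Real.log |∏ i, Polynomial.eval (α i) ((Q j).map (Int.castRingHom ℝ))| := by
    refine Finset.sum_nonneg (fun j _ => mul_nonneg (hc j) (Real.log_nonneg ?_))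
    rw [← hnval j]
    have := Int.one_le_abs (hn0 j)
    calc (1 : ℝ) ≤ |(n j : ℤ)| := by exact_mod_cast this
    _ = |((n j : ℤ) : ℝ)| := by push_cast; rfl
  constructor
  · calc m * d + _ = (d : ℝ) * m + _ := by ring_nf
    _ ≤ ∑ i, α i := hsum2
  · have hd0 : (0 : ℝ) < d := by exact_mod_cast hd
    rw [one_div, inv_mul_eq_div, le_div_iff₀ hd0]
    calc m * d = (d : ℝ) * m + 0 := by ring
    _ ≤ (d : ℝ) * m + ∑ j, c j *
        Real.log |∏ i, Polynomial.eval (α i) ((Q j).map (Int.castRingHom ℝ))| := by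
        linarith
    _ ≤ ∑ i, α i := hsum2
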